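/- arXiv:2206.02356 — 3 statements merged into one kernel-verified Lean document; each statement's English description precedes it below -/
import Mathlib

section
/- Bounding Lemma: let (Ω, F, P) be a probability space and (X_n)_{n≥1} a sequence of real random variables. Suppose ε, δ, p, C > 0 and r ≥ 0 are constants such that P(|X_n| ≥ ε n^δ) ≤ C · n^{r − pδ} · ε^{−p} for every n ≥ 1. Define the random variable T = T_bound((X_n), ε n^δ) as the smallest positive integer such that |X_m(ω)| ≤ ε m^δ for every integer m > T(ω), with T(ω) = +∞ if no such integer exists. Then: (i) if pδ > 1 + r, then T < ∞ almost surely; (ii) for every q ∈ (0, pδ − (1 + r)), the expectation E[T^q] is finite. -/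
open MeasureTheory
open scoped ENNReal

/-- `T_bound((X_n), g)`: the smallest positive integer `T` such that
`|X_m(ω)| ≤ g(m)` for every integer `m > T`, equal to `+∞` if no such
integer exists. -/
noncomputable def Tbound {Ω : Type*} (X : ℕ → Ω → ℝ) (g : ℕ → ℝ) (ω : Ω) : ℝ≥0∞ :=
  sInf {z : ℝ≥0∞ | ∃ T : ℕ, z = (T : ℝ≥0∞) ∧ 0 < T ∧
    ∀ m : ℕ, T < m → |X m ω| ≤ g m}

/-- Bounding Lemma: if `P(|X_n| ≥ ε n^δ) ≤ C n^{r - pδ} ε^{-p}` for every `n ≥ 1`,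
then (i) if `pδ > 1 + r` the random time `T_bound((X_n), ε n^δ)` is almost surely
finite, and (ii) its `q`-th moment is finite for every `q ∈ (0, pδ - (1 + r))`. -/
theorem bounding_lemma {Ω : Type*} [MeasurableSpace Ω] (μ : Measure Ω)
    [IsProbabilityMeasure μ] (X : ℕ → Ω → ℝ) (hXmeas : ∀ n, Measurable (X n))
    (ε δ p C r : ℝ) (hε : 0 < ε) (hδ : 0 < δ) (hp : 0 < p) (hC : 0 < C) (hr : 0 ≤ r)
    (hbound : ∀ n : ℕ, 1 ≤ n →
      μ {ω | ε * (n : ℝ) ^ δ ≤ |X n ω|} ≤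
        ENNReal.ofReal (C * (n : ℝ) ^ (r - p * δ) * ε ^ (-p))) :
    (1 + r < p * δ →
      ∀ᵐ ω ∂μ, Tbound X (fun n => ε * (n : ℝ) ^ δ) ω < ⊤) ∧
    (∀ q : ℝ, 0 < q → q < p * δ - (1 + r) →
      ∫⁻ ω, Tbound X (fun n => ε * (n : ℝ) ^ δ) ω ^ q ∂μ < ⊤) := by
  classical
  set A : ℕ → Set Ω := fun n => {ω | ε * (n : ℝ) ^ δ ≤ |X n ω|} with hAdef
  have hAmeas : ∀ n, MeasurableSet (A n) := fun n =>
    measurableSet_le measurable_const (hXmeas n).abs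
  have main : ∀ q : ℝ, 0 < q → q < p * δ - (1 + r) →
      (∫⁻ ω, Tbound X (fun n => ε * (n : ℝ) ^ δ) ω ^ q ∂μ < ⊤) ∧
      (∀ᵐ ω ∂μ, Tbound X (fun n => ε * (n : ℝ) ^ δ) ω ^ q < ⊤) := by
    intro q hq hq2
    set f : ℕ → Ω → ℝ≥0∞ := fun n ω =>
      (n : ℝ≥0∞) ^ q * (A n).indicator (fun _ => (1 : ℝ≥0∞)) ω with hfdef
    set g : Ω → ℝ≥0∞ := fun ω => 1 + ∑' n, f n ω with hgdef
    have hfmeas : ∀ n, Measurable (f n) := fun n =>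
      (measurable_const.indicator (hAmeas n)).const_mul _
    have hgmeas : Measurable g :=
      measurable_const.add (Measurable.ennreal_tsum hfmeas)
    -- pointwise key bound
    have hkey : ∀ ω, Tbound X (fun n => ε * (n : ℝ) ^ δ) ω ^ q ≤ g ω := by
      intro ω
      by_cases hS : ∃ T : ℕ, 0 < T ∧ ∀ m : ℕ, T < m → |X m ω| ≤ ε * (m : ℝ) ^ δ
      · set T₀ := Nat.find hS with hT₀def
        obtain ⟨hT₀pos, hT₀all⟩ := Nat.find_spec hS
        have hle : Tbound X (fun n => ε * (n : ℝ) ^ δ) ω ≤ (T₀ : ℝ≥0∞) :=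
          sInf_le ⟨T₀, rfl, hT₀pos, hT₀all⟩
        refine le_trans (ENNReal.rpow_le_rpow hle hq.le) ?_
        have hp1 : 0 < T₀ := hT₀def ▸ hT₀pos
        rcases Nat.lt_or_ge T₀ 2 with h1 | h2
        · have : (T₀ : ℝ≥0∞) = 1 := by
            have : T₀ = 1 := by omega
            rw [this]; norm_num
          rw [this, ENNReal.one_rpow]
          exact le_add_right le_rfl
        · -- T₀ ≥ 2; minimality gives ω ∈ A T₀
          have hmin := Nat.find_min hS (show T₀ - 1 < Nat.find hS by omega)
          push_neg at hmin
          obtain ⟨m, hm1, hm2⟩ := hmin (by omega)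
          have hmem : ω ∈ A T₀ := by
            have hmeq : m = T₀ := by
              by_contra hne
              have hlt : T₀ < m := by omega
              exact absurd (hT₀all m (hT₀def ▸ hlt)) (not_le.mpr hm2)
            subst hmeq
            exact le_of_lt hm2
          have : f T₀ ω = (T₀ : ℝ≥0∞) ^ q := by
            simp [hfdef, Set.indicator_of_mem hmem]
          calc (T₀ : ℝ≥0∞) ^ q = f T₀ ω := this.symm
            _ ≤ ∑' n, f n ω := ENNReal.le_tsum T₀
            _ ≤ g ω := le_add_self
      · -- no bounding time exists: Tbound = ⊤ and the sum is ⊤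
        have hTop : Tbound X (fun n => ε * (n : ℝ) ^ δ) ω = ⊤ := by
          rw [Tbound, sInf_eq_top]
          rintro z ⟨T, rfl, hT, hall⟩
          exact absurd ⟨T, hT, hall⟩ hS
        have hsum : (∑' n, f n ω) = ⊤ := by
          by_contra hne
          have htend := ENNReal.tendsto_atTop_zero_of_tsum_ne_top hne
          have hev : ∀ᶠ n in Filter.atTop, f n ω < 1 :=
            htend.eventually_lt_const (by norm_num)
          obtain ⟨N, hN⟩ := Filter.eventually_atTop.mp hev
          have : ¬(0 < N + 1 ∧ ∀ m : ℕ, N + 1 < m → |X m ω| ≤ ε * (m : ℝ) ^ δ) :=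
            fun h => hS ⟨N + 1, h⟩
          push_neg at this
          obtain ⟨m, hm1, hm2⟩ := this (by omega)
          have hmem : ω ∈ A m := le_of_lt hm2
          have hfm : (1 : ℝ≥0∞) ≤ f m ω := by
            have : f m ω = (m : ℝ≥0∞) ^ q := by
              simp [hfdef, Set.indicator_of_mem hmem]
            rw [this]
            exact ENNReal.one_le_rpow (Nat.one_le_cast.mpr (by omega)) hq
          exact absurd (hN m (by omega)) (not_lt.mpr hfm)
        have hgtop : g ω = ⊤ := by simp [hgdef, hsum]
        rw [hgtop]
        exact le_top
    -- integral of g is finite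
    have hint : ∫⁻ ω, g ω ∂μ < ⊤ := by
      have hcalc : ∫⁻ ω, g ω ∂μ = 1 + ∑' n : ℕ, (n : ℝ≥0∞) ^ q * μ (A n) := by
        rw [hgdef]
        simp only
        rw [lintegral_add_left measurable_const, lintegral_one, measure_univ,
          lintegral_tsum (fun n => (hfmeas n).aemeasurable)]
        congr 1
        refine tsum_congr fun n => ?_
        rw [hfdef]
        simp only
        rw [lintegral_const_mul _ (measurable_const.indicator (hAmeas n))]
        congr 1
        exact lintegral_indicator_one (hAmeas n)
      rw [hcalc]
      have hexp : q + (r - p * δ) < -1 := by linarith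
      set h' : ℕ → ℝ := fun n => (C * ε ^ (-p)) * (n : ℝ) ^ (q + (r - p * δ)) with hh'def
      have hsummable : Summable h' :=
        (Real.summable_nat_rpow.mpr hexp).mul_left _
      have hterm : ∀ n : ℕ, (n : ℝ≥0∞) ^ q * μ (A n) ≤ ENNReal.ofReal (h' n) := by
        intro n
        rcases Nat.eq_zero_or_pos n with h0 | h1
        · subst h0
          simp [ENNReal.zero_rpow_of_pos hq]
        · have hnpos : (0 : ℝ) < (n : ℝ) := by exact_mod_cast h1
          have h1' := hbound n h1
          calc (n : ℝ≥0∞) ^ q * μ (A n)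
              ≤ (n : ℝ≥0∞) ^ q * ENNReal.ofReal (C * (n : ℝ) ^ (r - p * δ) * ε ^ (-p)) :=
                mul_le_mul_right h1' _
            _ = ENNReal.ofReal ((n : ℝ) ^ q) *
                ENNReal.ofReal (C * (n : ℝ) ^ (r - p * δ) * ε ^ (-p)) := by
                rw [← ENNReal.ofReal_rpow_of_nonneg hnpos.le hq.le,
                  ENNReal.ofReal_natCast]
            _ = ENNReal.ofReal ((n : ℝ) ^ q * (C * (n : ℝ) ^ (r - p * δ) * ε ^ (-p))) := by
                rw [ENNReal.ofReal_mul (Real.rpow_nonneg hnpos.le q)]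
            _ = ENNReal.ofReal (h' n) := by
                congr 1
                rw [hh'def]
                simp only
                rw [Real.rpow_add hnpos]
                ring
      calc (1 : ℝ≥0∞) + ∑' n : ℕ, (n : ℝ≥0∞) ^ q * μ (A n)
          ≤ 1 + ∑' n, ENNReal.ofReal (h' n) := add_le_add_right (ENNReal.tsum_le_tsum hterm) _
        _ = 1 + ENNReal.ofReal (∑' n, h' n) := by
            rw [ENNReal.ofReal_tsum_of_nonneg (fun n =>
              mul_nonneg (mul_nonneg hC.le (Real.rpow_nonneg hε.le _))
                (Real.rpow_nonneg (Nat.cast_nonneg n) _)) hsummable]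
        _ < ⊤ := by simp [ENNReal.add_lt_top, ENNReal.ofReal_lt_top]
    refine ⟨lt_of_le_of_lt (lintegral_mono hkey) hint, ?_⟩
    exact (ae_lt_top hgmeas hint.ne).mono fun ω h => lt_of_le_of_lt (hkey ω) h
  constructor
  · intro h1r
    have hq : 0 < (p * δ - (1 + r)) / 2 := by linarith
    obtain ⟨-, hae⟩ := main ((p * δ - (1 + r)) / 2) hq (by linarith)
    refine hae.mono fun ω h => ?_
    by_contra hT
    rw [not_lt, top_le_iff] at hT
    rw [hT, ENNReal.top_rpow_of_pos hq] at h
    exact absurd h (lt_irrefl _)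
  · intro q hq hq2
    exact (main q hq hq2).1
end

section
/- Monotonicity (Hypothesis (i)) for the Burgers operator: let γ > 0 be a constant such that max_{x∈[0,1]} |h(x)| ≤ γ (∫_{0}^{1} h′(x)² dx)^{1/2} for every continuously differentiable h : [0,1] → ℝ with h(0) = h(1) = 0. Then for all twice continuously differentiable u, w : [0,1] → ℝ with u(0) = u(1) = w(0) = w(1) = 0, ∫_{0}^{1} [ (u − w)″(x) + u(x)u′(x) − w(x)w′(x) ] ( u(x) − w(x) ) dx ≤ −(1/2) ∫_{0}^{1} ( (u − w)′(x) )² dx + (γ²/8) ( ∫_{0}^{1} (u(x) − w(x))² dx ) ( ∫_{0}^{1} u′(x)² dx ). -/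
open Set

/-- Monotonicity (Hypothesis (i)) for the Burgers operator: if `γ` is a Sobolev
embedding constant (`max |h| ≤ γ (∫₀¹ h'²)^{1/2}` for all C¹ functions vanishing
at the endpoints), then for all C² functions `u, w` vanishing at the endpoints,
`∫₀¹ ((u-w)'' + u u' - w w')(u - w) dx
  ≤ -(1/2) ∫₀¹ ((u-w)')² dx + (γ²/8)(∫₀¹ (u-w)² dx)(∫₀¹ u'² dx)`. -/
theorem burgers_monotonicity
    (γ : ℝ) (hγpos : 0 < γ)
    (hγ : ∀ h h' : ℝ → ℝ, (∀ x ∈ Icc (0 : ℝ) 1, HasDerivAt h (h' x) x) →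
      ContinuousOn h' (Icc 0 1) → h 0 = 0 → h 1 = 0 →
      ∀ x ∈ Icc (0 : ℝ) 1, |h x| ≤ γ * Real.sqrt (∫ y in (0 : ℝ)..1, h' y ^ 2))
    (u w u' w' u'' w'' : ℝ → ℝ)
    (hu : ∀ x ∈ Icc (0 : ℝ) 1, HasDerivAt u (u' x) x)
    (hw : ∀ x ∈ Icc (0 : ℝ) 1, HasDerivAt w (w' x) x)
    (hu' : ∀ x ∈ Icc (0 : ℝ) 1, HasDerivAt u' (u'' x) x)
    (hw' : ∀ x ∈ Icc (0 : ℝ) 1, HasDerivAt w' (w'' x) x)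
    (hu'' : ContinuousOn u'' (Icc 0 1))
    (hw'' : ContinuousOn w'' (Icc 0 1))
    (hu0 : u 0 = 0) (hu1 : u 1 = 0) (hw0 : w 0 = 0) (hw1 : w 1 = 0) :
    ∫ x in (0 : ℝ)..1,
        ((u'' x - w'' x) + (u x * u' x - w x * w' x)) * (u x - w x) ≤
      -(1 / 2) * (∫ x in (0 : ℝ)..1, (u' x - w' x) ^ 2) +
        γ ^ 2 / 8 * (∫ x in (0 : ℝ)..1, (u x - w x) ^ 2) *
          ∫ x in (0 : ℝ)..1, u' x ^ 2 := by
  have h01 : (0:ℝ) ≤ 1 := by norm_num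
  have hIcc : uIcc (0:ℝ) 1 = Icc 0 1 := uIcc_of_le h01
  -- continuity facts
  have hcu : ContinuousOn u (Icc 0 1) := fun x hx =>
    (hu x hx).continuousAt.continuousWithinAt
  have hcw : ContinuousOn w (Icc 0 1) := fun x hx =>
    (hw x hx).continuousAt.continuousWithinAt
  have hcu' : ContinuousOn u' (Icc 0 1) := fun x hx =>
    (hu' x hx).continuousAt.continuousWithinAt
  have hcw' : ContinuousOn w' (Icc 0 1) := fun x hx =>
    (hw' x hx).continuousAt.continuousWithinAt
  -- integrability facts
  have hiF : IntervalIntegrable (fun x =>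
      ((u'' x - w'' x) + (u x * u' x - w x * w' x)) * (u x - w x)) MeasureTheory.volume 0 1 := by
    apply ContinuousOn.intervalIntegrable; rw [hIcc]
    exact (((hu''.sub hw'').add ((hcu.mul hcu').sub (hcw.mul hcw'))).mul (hcu.sub hcw))
  have hiV : IntervalIntegrable (fun x => (u' x - w' x)^2) MeasureTheory.volume 0 1 := by
    apply ContinuousOn.intervalIntegrable; rw [hIcc]
    exact (hcu'.sub hcw').pow 2
  have hiH : IntervalIntegrable (fun x => (u x - w x)^2) MeasureTheory.volume 0 1 := by
    apply ContinuousOn.intervalIntegrable; rw [hIcc]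
    exact (hcu.sub hcw).pow 2
  have hiU : IntervalIntegrable (fun x => u' x ^2) MeasureTheory.volume 0 1 := by
    apply ContinuousOn.intervalIntegrable; rw [hIcc]
    exact hcu'.pow 2
  have hiN : IntervalIntegrable (fun x => u' x * (u x - w x)^2) MeasureTheory.volume 0 1 := by
    apply ContinuousOn.intervalIntegrable; rw [hIcc]
    exact hcu'.mul ((hcu.sub hcw).pow 2)
  have hiB : IntervalIntegrable (fun x => |u' x| * |u x - w x|) MeasureTheory.volume 0 1 := by
    apply ContinuousOn.intervalIntegrable; rw [hIcc]
    exact hcu'.abs.mul (hcu.sub hcw).abs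
  set V := ∫ x in (0:ℝ)..1, (u' x - w' x)^2 with hVdef
  set H := ∫ x in (0:ℝ)..1, (u x - w x)^2 with hHdef
  set U := ∫ x in (0:ℝ)..1, u' x ^2 with hUdef
  set N := ∫ x in (0:ℝ)..1, u' x * (u x - w x)^2 with hNdef
  set B := ∫ x in (0:ℝ)..1, |u' x| * |u x - w x| with hBdef
  -- nonnegativity
  have hVnn : 0 ≤ V := intervalIntegral.integral_nonneg h01 (fun x _ => sq_nonneg _)
  have hHnn : 0 ≤ H := intervalIntegral.integral_nonneg h01 (fun x _ => sq_nonneg _)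
  have hUnn : 0 ≤ U := intervalIntegral.integral_nonneg h01 (fun x _ => sq_nonneg _)
  have hBnn : 0 ≤ B := intervalIntegral.integral_nonneg h01
    (fun x _ => mul_nonneg (abs_nonneg _) (abs_nonneg _))
  -- Step 1: FTC with antiderivative G
  have hg : ∀ x ∈ Icc (0:ℝ) 1, HasDerivAt
      (fun x => (u x - w x) * (u' x - w' x) + u x ^3/6 + w x ^3/3 - u x * w x ^2/2)
      (((u'' x - w'' x) + (u x * u' x - w x * w' x)) * (u x - w x)
        + (u' x - w' x)^2 - (1/2) * (u' x * (u x - w x)^2)) x := by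
    intro x hx
    have h1 := ((hu x hx).sub (hw x hx)).mul ((hu' x hx).sub (hw' x hx))
    have h2 := ((hu x hx).pow 3).div_const 6
    have h3 := ((hw x hx).pow 3).div_const 3
    have h4 := ((hu x hx).mul ((hw x hx).pow 2)).div_const 2
    have h5 := ((h1.add h2).add h3).sub h4
    refine h5.congr_deriv ?_
    simp only [Pi.sub_apply, Pi.pow_apply, Pi.mul_apply]
    ring
  have hFTC : (∫ x in (0:ℝ)..1,
      (((u'' x - w'' x) + (u x * u' x - w x * w' x)) * (u x - w x)
        + (u' x - w' x)^2 - (1/2) * (u' x * (u x - w x)^2))) = 0 := by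
    rw [intervalIntegral.integral_eq_sub_of_hasDerivAt (by rw [hIcc]; exact hg)]
    · simp [hu0, hu1, hw0, hw1]
    · apply ContinuousOn.intervalIntegrable; rw [hIcc]
      exact ((((hu''.sub hw'').add ((hcu.mul hcu').sub (hcw.mul hcw'))).mul
        (hcu.sub hcw)).add ((hcu'.sub hcw').pow 2)).sub
        ((continuousOn_const.mul (hcu'.mul ((hcu.sub hcw).pow 2))))
  have hsplit : (∫ x in (0:ℝ)..1,
      ((u'' x - w'' x) + (u x * u' x - w x * w' x)) * (u x - w x)) = -V + (1/2) * N := by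
    have e1 : (∫ x in (0:ℝ)..1,
        (((u'' x - w'' x) + (u x * u' x - w x * w' x)) * (u x - w x)
          + (u' x - w' x)^2 - (1/2) * (u' x * (u x - w x)^2)))
        = (∫ x in (0:ℝ)..1,
          ((u'' x - w'' x) + (u x * u' x - w x * w' x)) * (u x - w x)) + V - (1/2) * N := by
      rw [intervalIntegral.integral_sub (hiF.add hiV) (hiN.const_mul (1/2)),
        intervalIntegral.integral_add hiF hiV, intervalIntegral.integral_const_mul]
    rw [e1] at hFTC
    linarith
  -- Step 2: Sobolev bound on u - w
  have hsob : ∀ x ∈ Icc (0:ℝ) 1, |u x - w x| ≤ γ * Real.sqrt V := by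
    have := hγ (fun x => u x - w x) (fun x => u' x - w' x)
      (fun x hx => (hu x hx).sub (hw x hx)) (hcu'.sub hcw')
      (by simp [hu0, hw0]) (by simp [hu1, hw1])
    exact this
  -- Step 3: N ≤ γ √V B
  have hNle : N ≤ γ * Real.sqrt V * B := by
    have : N ≤ ∫ x in (0:ℝ)..1, (γ * Real.sqrt V) * (|u' x| * |u x - w x|) := by
      apply intervalIntegral.integral_mono_on h01 hiN (hiB.const_mul _)
      intro x hx
      have h1 : u' x * (u x - w x)^2 ≤ |u' x| * |u x - w x| * |u x - w x| := by
        calc u' x * (u x - w x)^2 ≤ |u' x * (u x - w x)^2| := le_abs_self _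
        _ = |u' x| * |u x - w x| * |u x - w x| := by
            rw [abs_mul, abs_pow]; ring
      have h2 := hsob x hx
      have h3 : |u' x| * |u x - w x| * |u x - w x| ≤ |u' x| * |u x - w x| * (γ * Real.sqrt V) :=
        mul_le_mul_of_nonneg_left h2 (mul_nonneg (abs_nonneg _) (abs_nonneg _))
      linarith
    calc N ≤ _ := this
    _ = γ * Real.sqrt V * B := by rw [intervalIntegral.integral_const_mul]
  -- Step 4: Cauchy–Schwarz via discriminant: B^2 ≤ U * H
  have hCS : B^2 ≤ U * H := by
    have hq : ∀ t : ℝ, 0 ≤ U * (t * t) + (2*B) * t + H := by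
      intro t
      have expand : (∫ x in (0:ℝ)..1, (t * |u' x| + |u x - w x|)^2)
          = U * (t * t) + (2*B) * t + H := by
        have e : ∀ x : ℝ, (t * |u' x| + |u x - w x|)^2
            = t^2 * u' x ^2 + (2*t) * (|u' x| * |u x - w x|) + (u x - w x)^2 := by
          intro x
          have h1 : |u' x|^2 = u' x ^2 := sq_abs _
          have h2 : |u x - w x|^2 = (u x - w x)^2 := sq_abs _
          nlinarith [sq_abs (u' x), sq_abs (u x - w x)]
        rw [intervalIntegral.integral_congr (g := fun x =>
          t^2 * u' x ^2 + (2*t) * (|u' x| * |u x - w x|) + (u x - w x)^2)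
          (fun x _ => e x)]
        rw [intervalIntegral.integral_add ((hiU.const_mul _).add (hiB.const_mul _)) hiH,
          intervalIntegral.integral_add (hiU.const_mul _) (hiB.const_mul _),
          intervalIntegral.integral_const_mul, intervalIntegral.integral_const_mul]
        ring
      rw [← expand]
      exact intervalIntegral.integral_nonneg h01 (fun x _ => sq_nonneg _)
    have := discrim_le_zero (a := U) (b := 2*B) (c := H) hq
    rw [discrim] at this
    nlinarith
  -- Step 5: combine
  rw [hsplit]
  have hsq : Real.sqrt V ^ 2 = V := Real.sq_sqrt hVnn
  nlinarith [sq_nonneg (Real.sqrt V - γ * B / 2), Real.sqrt_nonneg V,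
    mul_pos hγpos hγpos, sq_nonneg γ]
end

section
/- Quasi-potential of the two-dimensional linear system with rotation: let λ > 0, β ∈ ℝ and let A be the 2×2 real matrix with rows (−λ, −β) and (β, −λ). For every x ∈ ℝ², the infimum inf{ (1/2) ∫_{−∞}^{0} ‖Ẏ(t) − A Y(t)‖² dt : Y : (−∞, 0] → ℝ² locally absolutely continuous, Ẏ − AY ∈ L²((−∞,0]; ℝ²), Y(0) = x, and ‖Y(t)‖ → 0 as t → −∞ } equals λ‖x‖², where ‖·‖ is the Euclidean norm on ℝ²; moreover the infimum is attained (by Y(t) = e^{(λI + βJ)t} x, where J is the rotation matrix with rows (0, −1) and (1, 0)). -/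
open MeasureTheory Filter Set
open scoped InnerProductSpace

section Aux

variable {E : Type*} [NormedAddCommGroup E] [InnerProductSpace ℝ E] [CompleteSpace E]

lemma qp_double_swap {f : ℝ → E} {a b : ℝ} (hf : IntegrableOn f (Ioc a b)) :
    ∫ t in Ioc a b, ⟪f t, ∫ s in Ioc a t, f s⟫_ℝ = ‖∫ s in Ioc a b, f s‖ ^ 2 / 2 := by
  set μ := volume.restrict (Ioc a b) with hμ
  set G : ℝ → E := fun u => ∫ s in Ioc a u, f s with hG
  set g : ℝ × ℝ → ℝ := fun p => ⟪f p.1, f p.2⟫_ℝ with hg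
  set S : Set (ℝ × ℝ) := {p : ℝ × ℝ | p.2 ≤ p.1} with hS
  have hSm : MeasurableSet S := measurableSet_le measurable_snd measurable_fst
  have hfm : AEStronglyMeasurable f μ := hf.aestronglyMeasurable
  have hgm : AEStronglyMeasurable g (μ.prod μ) := (hfm.comp_fst).inner (hfm.comp_snd)
  have hFi : Integrable (S.indicator g) (μ.prod μ) := by
    refine Integrable.mono' (hf.norm.mul_prod hf.norm) (hgm.indicator hSm) ?_
    refine Eventually.of_forall fun p => ?_
    refine le_trans (norm_indicator_le_norm_self g p) ?_
    exact (norm_inner_le_norm _ _)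
  have swap := integral_integral_swap (f := fun t s => S.indicator g (t, s)) hFi
  have hGcont : ContinuousOn G (Icc a b) :=
    intervalIntegral.continuousOn_primitive ((integrableOn_Icc_iff_integrableOn_Ioc (f := f)).2 hf)
  have hL : (∫ t, ∫ s, S.indicator g (t, s) ∂μ ∂μ) = ∫ t in Ioc a b, ⟪f t, G t⟫_ℝ := by
    refine setIntegral_congr_fun measurableSet_Ioc fun t ht => ?_
    have h1 : (fun s => S.indicator g (t, s)) = (Iic t).indicator fun s => ⟪f t, f s⟫_ℝ := by
      ext s
      simp [Set.indicator_apply, hS, hg]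
    rw [h1, setIntegral_indicator measurableSet_Iic, Ioc_inter_Iic, min_eq_right ht.2,
      integral_inner (hf.mono_set (Ioc_subset_Ioc le_rfl ht.2))]
  have hR : (∫ s, ∫ t, S.indicator g (t, s) ∂μ ∂μ)
      = ∫ s in Ioc a b, (⟪f s, G b⟫_ℝ - ⟪f s, G s⟫_ℝ) := by
    refine setIntegral_congr_fun measurableSet_Ioc fun s hs => ?_
    have h1 : (fun t => S.indicator g (t, s)) = (Ici s).indicator fun t => ⟪f s, f t⟫_ℝ := by
      ext t
      simp [Set.indicator_apply, hS, hg, real_inner_comm]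
    rw [h1, setIntegral_indicator measurableSet_Ici]
    have h2 : Ioc a b ∩ Ici s = Icc s b := by
      ext t; constructor
      · rintro ⟨⟨_, h⟩, h'⟩; exact ⟨h', h⟩
      · rintro ⟨h', h⟩; exact ⟨⟨lt_of_lt_of_le hs.1 h', h⟩, h'⟩
    rw [h2, integral_Icc_eq_integral_Ioc,
      integral_inner (hf.mono_set (Ioc_subset_Ioc hs.1.le le_rfl))]
    have h3 : (∫ t in Ioc a s, f t) + ∫ t in Ioc s b, f t = ∫ t in Ioc a b, f t := by
      rw [← setIntegral_union (Ioc_disjoint_Ioc_of_le le_rfl) measurableSet_Ioc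
        (hf.mono_set (Ioc_subset_Ioc le_rfl hs.2)) (hf.mono_set (Ioc_subset_Ioc hs.1.le le_rfl)),
        Ioc_union_Ioc_eq_Ioc hs.1.le hs.2]
    have : (∫ t in Ioc s b, f t) = G b - G s := by
      rw [hG]; dsimp only; rw [← h3]; abel
    rw [this, inner_sub_right]
  obtain ⟨C, hC⟩ : ∃ C, ∀ u ∈ Icc a b, ‖G u‖ ≤ C :=
    (isCompact_Icc.exists_bound_of_continuousOn hGcont)
  have hGm : AEStronglyMeasurable G μ :=
    (hGcont.aestronglyMeasurable measurableSet_Icc).mono_measure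
      (Measure.restrict_mono Ioc_subset_Icc_self le_rfl)
  have hint2 : Integrable (fun s => ⟪f s, G s⟫_ℝ) μ := by
    refine Integrable.mono' (hf.norm.mul_const C) (hfm.inner hGm) ?_
    filter_upwards [ae_restrict_mem measurableSet_Ioc] with s hs
    exact le_trans (norm_inner_le_norm _ _)
      (mul_le_mul_of_nonneg_left (hC s (Ioc_subset_Icc_self hs)) (norm_nonneg _))
  have hint1 : Integrable (fun s => ⟪f s, G b⟫_ℝ) μ := by
    refine Integrable.mono' (hf.norm.mul_const ‖G b‖) (hfm.inner aestronglyMeasurable_const) ?_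
    exact Eventually.of_forall fun s => norm_inner_le_norm _ _
  have hval : (∫ s in Ioc a b, ⟪f s, G b⟫_ℝ) = ‖G b‖ ^ 2 := by
    have : ∀ s, ⟪f s, G b⟫_ℝ = ⟪G b, f s⟫_ℝ := fun s => real_inner_comm _ _
    simp_rw [this]
    rw [integral_inner hf, real_inner_self_eq_norm_sq]
  rw [hL, hR] at swap
  rw [integral_sub hint1 hint2, hval] at swap
  linarith [swap]

lemma qp_inner_primitive_integrableOn {f Y : ℝ → E} {a b : ℝ}
    (hf : IntegrableOn f (Ioc a b))
    (hY : ∀ t ∈ Icc a b, Y t = Y a + ∫ s in Ioc a t, f s) :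
    IntegrableOn (fun t => ⟪f t, Y t⟫_ℝ) (Ioc a b) := by
  have hGcont : ContinuousOn (fun u => ∫ s in Ioc a u, f s) (Icc a b) :=
    intervalIntegral.continuousOn_primitive ((integrableOn_Icc_iff_integrableOn_Ioc (f := f)).2 hf)
  have hYcont : ContinuousOn Y (Icc a b) :=
    (continuousOn_const.add hGcont).congr hY
  obtain ⟨C, hC⟩ : ∃ C, ∀ u ∈ Icc a b, ‖Y u‖ ≤ C :=
    isCompact_Icc.exists_bound_of_continuousOn hYcont
  have hfm : AEStronglyMeasurable f (volume.restrict (Ioc a b)) := hf.aestronglyMeasurable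
  have hYm : AEStronglyMeasurable Y (volume.restrict (Ioc a b)) :=
    (hYcont.aestronglyMeasurable measurableSet_Icc).mono_measure
      (Measure.restrict_mono Ioc_subset_Icc_self le_rfl)
  refine Integrable.mono' (hf.norm.mul_const C) (hfm.inner hYm) ?_
  filter_upwards [ae_restrict_mem measurableSet_Ioc] with s hs
  exact le_trans (norm_inner_le_norm _ _)
    (mul_le_mul_of_nonneg_left (hC s (Ioc_subset_Icc_self hs)) (norm_nonneg _))

lemma qp_integral_inner_primitive {f Y : ℝ → E} {a b : ℝ} (hab : a ≤ b)
    (hf : IntegrableOn f (Ioc a b))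
    (hY : ∀ t ∈ Icc a b, Y t = Y a + ∫ s in Ioc a t, f s) :
    ∫ t in Ioc a b, ⟪f t, Y t⟫_ℝ = (‖Y b‖ ^ 2 - ‖Y a‖ ^ 2) / 2 := by
  set G : ℝ → E := fun u => ∫ s in Ioc a u, f s with hG
  have hGcont : ContinuousOn G (Icc a b) :=
    intervalIntegral.continuousOn_primitive ((integrableOn_Icc_iff_integrableOn_Ioc (f := f)).2 hf)
  obtain ⟨C, hC⟩ : ∃ C, ∀ u ∈ Icc a b, ‖G u‖ ≤ C :=
    isCompact_Icc.exists_bound_of_continuousOn hGcont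
  have hfm : AEStronglyMeasurable f (volume.restrict (Ioc a b)) := hf.aestronglyMeasurable
  have hGm : AEStronglyMeasurable G (volume.restrict (Ioc a b)) :=
    (hGcont.aestronglyMeasurable measurableSet_Icc).mono_measure
      (Measure.restrict_mono Ioc_subset_Icc_self le_rfl)
  have hint2 : Integrable (fun s => ⟪f s, G s⟫_ℝ) (volume.restrict (Ioc a b)) := by
    refine Integrable.mono' (hf.norm.mul_const C) (hfm.inner hGm) ?_
    filter_upwards [ae_restrict_mem measurableSet_Ioc] with s hs
    exact le_trans (norm_inner_le_norm _ _)
      (mul_le_mul_of_nonneg_left (hC s (Ioc_subset_Icc_self hs)) (norm_nonneg _))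
  have hint1 : Integrable (fun s => ⟪f s, Y a⟫_ℝ) (volume.restrict (Ioc a b)) := by
    refine Integrable.mono' (hf.norm.mul_const ‖Y a‖) (hfm.inner aestronglyMeasurable_const) ?_
    exact Eventually.of_forall fun s => norm_inner_le_norm _ _
  have hsplit : (∫ t in Ioc a b, ⟪f t, Y t⟫_ℝ)
      = (∫ t in Ioc a b, ⟪f t, Y a⟫_ℝ) + ∫ t in Ioc a b, ⟪f t, G t⟫_ℝ := by
    rw [← integral_add hint1 hint2]
    refine setIntegral_congr_fun measurableSet_Ioc fun t ht => ?_
    rw [hY t (Ioc_subset_Icc_self ht), inner_add_right]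
  have h1 : (∫ t in Ioc a b, ⟪f t, Y a⟫_ℝ) = ⟪Y a, G b⟫_ℝ := by
    have hc : ∀ t, ⟪f t, Y a⟫_ℝ = ⟪Y a, f t⟫_ℝ := fun t => real_inner_comm _ _
    simp_rw [hc]
    rw [integral_inner hf]
  rw [hsplit, h1, qp_double_swap hf]
  have hYb : Y b = Y a + G b := hY b (right_mem_Icc.2 hab)
  rw [hYb, @norm_add_sq_real]
  ring

end Aux

lemma qp_innerA (l β : ℝ) (y : EuclideanSpace ℝ (Fin 2)) :
    ⟪Matrix.toEuclideanLin !![-l, -β; β, -l] y, y⟫_ℝ = -l * ‖y‖ ^ 2 := by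
  rw [norm_sq_eq_re_inner (𝕜 := ℝ)]
  simp [PiLp.inner_apply, Matrix.toEuclideanLin_apply, Matrix.mulVec, dotProduct,
    Fin.sum_univ_two]
  rw [EuclideanSpace.norm_sq_eq, Fin.sum_univ_two, Real.norm_eq_abs, Real.norm_eq_abs, sq_abs, sq_abs]
  ring

lemma qp_pointwise (l β : ℝ) (v y : EuclideanSpace ℝ (Fin 2)) :
    4 * l * ⟪v, y⟫_ℝ ≤ ‖v - Matrix.toEuclideanLin !![-l, -β; β, -l] y‖ ^ 2 := by
  set A := Matrix.toEuclideanLin !![-l, -β; β, -l] with hA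
  set w : EuclideanSpace ℝ (Fin 2) := v - A y with hw
  have hexp : ‖w - (2*l) • y‖ ^ 2
      = ‖w‖ ^ 2 - 2 * ⟪w, (2*l) • y⟫_ℝ + ‖(2*l) • y‖ ^ 2 := by
    rw [@norm_sub_sq_real]
  have hinner : ⟪w, (2*l) • y⟫_ℝ = 2*l*(⟪v, y⟫_ℝ - ⟪A y, y⟫_ℝ) := by
    rw [real_inner_smul_right, hw, inner_sub_left]
  have hAy : ⟪A y, y⟫_ℝ = -l * ‖y‖ ^ 2 := qp_innerA l β y
  have hny : ‖(2*l) • y‖ ^ 2 = 4 * l^2 * ‖y‖ ^ 2 := by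
    rw [norm_smul, mul_pow, Real.norm_eq_abs, sq_abs]
    ring
  have hfinal : ‖w‖ ^ 2 - 4 * l * ⟪v, y⟫_ℝ = ‖w - (2*l) • y‖ ^ 2 := by
    rw [hexp, hinner, hAy, hny]; ring
  linarith [hfinal, sq_nonneg ‖w - (2*l) • y‖]

noncomputable def qpY (l β : ℝ) (x : EuclideanSpace ℝ (Fin 2)) (t : ℝ) :
    EuclideanSpace ℝ (Fin 2) :=
  (WithLp.equiv 2 (Fin 2 → ℝ)).symm
    ![Real.exp (l*t) * (Real.cos (β*t) * x 0 - Real.sin (β*t) * x 1),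
      Real.exp (l*t) * (Real.sin (β*t) * x 0 + Real.cos (β*t) * x 1)]

noncomputable def qpY' (l β : ℝ) (x : EuclideanSpace ℝ (Fin 2)) (t : ℝ) :
    EuclideanSpace ℝ (Fin 2) :=
  (WithLp.equiv 2 (Fin 2 → ℝ)).symm
    ![l * qpY l β x t 0 - β * qpY l β x t 1,
      β * qpY l β x t 0 + l * qpY l β x t 1]

lemma qpY_hasDerivAt (l β : ℝ) (x : EuclideanSpace ℝ (Fin 2)) (t : ℝ) :
    HasDerivAt (qpY l β x) (qpY' l β x t) t := by
  set c1 : ℝ → ℝ := fun t => Real.exp (l*t) * (Real.cos (β*t) * x 0 - Real.sin (β*t) * x 1)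
    with hc1
  set c2 : ℝ → ℝ := fun t => Real.exp (l*t) * (Real.sin (β*t) * x 0 + Real.cos (β*t) * x 1)
    with hc2
  have hlt : HasDerivAt (fun u : ℝ => l*u) l t := by
    simpa using (hasDerivAt_id t).const_mul l
  have hbt : HasDerivAt (fun u : ℝ => β*u) β t := by
    simpa using (hasDerivAt_id t).const_mul β
  have he : HasDerivAt (fun u => Real.exp (l*u)) (Real.exp (l*t) * l) t := hlt.exp
  have hcos : HasDerivAt (fun u => Real.cos (β*u)) (-Real.sin (β*t) * β) t := hbt.cos
  have hsin : HasDerivAt (fun u => Real.sin (β*u)) (Real.cos (β*t) * β) t := hbt.sin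
  have hd1 : HasDerivAt c1 (l * c1 t - β * c2 t) t := by
    have := he.mul (((hcos.mul_const (x 0))).sub ((hsin.mul_const (x 1))))
    refine this.congr_deriv ?_
    simp only [hc1, hc2, Pi.sub_apply, Pi.add_apply]
    ring
  have hd2 : HasDerivAt c2 (β * c1 t + l * c2 t) t := by
    have := he.mul (((hsin.mul_const (x 0))).add ((hcos.mul_const (x 1))))
    refine this.congr_deriv ?_
    simp only [hc1, hc2, Pi.sub_apply, Pi.add_apply]
    ring
  have hpi : HasDerivAt (fun u => ![c1 u, c2 u])
      ![l * c1 t - β * c2 t, β * c1 t + l * c2 t] t := by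
    rw [hasDerivAt_pi]
    intro i
    fin_cases i
    · simpa using hd1
    · simpa using hd2
  have := ((PiLp.continuousLinearEquiv 2 ℝ (fun _ : Fin 2 => ℝ)).symm :
      (Fin 2 → ℝ) →L[ℝ] EuclideanSpace ℝ (Fin 2)).hasFDerivAt.comp_hasDerivAt t hpi
  exact this

lemma qpY_sub (l β : ℝ) (x : EuclideanSpace ℝ (Fin 2)) (t : ℝ) :
    qpY' l β x t - Matrix.toEuclideanLin !![-l, -β; β, -l] (qpY l β x t)
      = (2*l) • qpY l β x t := by
  ext i
  fin_cases i <;>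
    simp [qpY', qpY, Matrix.toEuclideanLin_apply, Matrix.mulVec, dotProduct,
      Fin.sum_univ_two] <;> ring

lemma qpY_norm_sq (l β : ℝ) (x : EuclideanSpace ℝ (Fin 2)) (t : ℝ) :
    ‖qpY l β x t‖ ^ 2 = Real.exp (2*l*t) * ‖x‖ ^ 2 := by
  rw [norm_sq_eq_re_inner (𝕜 := ℝ), norm_sq_eq_re_inner (𝕜 := ℝ) x]
  simp only [PiLp.inner_apply, RCLike.inner_apply, Fin.sum_univ_two, qpY,
    WithLp.equiv_symm_apply, PiLp.toLp_apply, conj_trivial, RCLike.re_to_real]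
  simp only [Matrix.cons_val_zero, Matrix.cons_val_one, Matrix.head_cons]
  have h1 : Real.exp (2*l*t) = Real.exp (l*t) * Real.exp (l*t) := by
    rw [← Real.exp_add]; ring_nf
  have h2 := Real.sin_sq_add_cos_sq (β*t)
  linear_combination (x 0 * x 0 + x 1 * x 1) * ((Real.exp (l*t) * Real.exp (l*t)) * h2 - h1)

lemma qp_exp_hasDeriv (c : ℝ) (hc : 0 < c) (t : ℝ) :
    HasDerivAt (fun u : ℝ => Real.exp (c*u) / c) (Real.exp (c*t)) t := by
  have hct : HasDerivAt (fun u : ℝ => c*u) c t := by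
    simpa using (hasDerivAt_id t).const_mul c
  have := hct.exp.div_const c
  refine this.congr_deriv ?_
  field_simp

lemma qp_exp_tendsto (c : ℝ) (hc : 0 < c) :
    Tendsto (fun t : ℝ => Real.exp (c*t) / c) atBot (nhds 0) := by
  have h1 : Tendsto (fun t : ℝ => c*t) atBot atBot :=
    Tendsto.const_mul_atBot hc tendsto_id
  have := Real.tendsto_exp_atBot.comp h1
  simpa using this.div_const c

lemma qp_exp_integrableOn (c : ℝ) (hc : 0 < c) :
    IntegrableOn (fun t : ℝ => Real.exp (c*t)) (Iic (0:ℝ)) := by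
  refine integrableOn_Iic_of_intervalIntegral_norm_bounded (μ := volume)
    (l := atBot) (a := id) (1/c) 0 (fun i => ?_) tendsto_id ?_
  · exact (Real.continuous_exp.comp (continuous_const.mul continuous_id)).integrableOn_Ioc
  · filter_upwards [eventually_le_atBot (0:ℝ)] with i hi
    have hii : IntervalIntegrable (fun t : ℝ => Real.exp (c*t)) volume i 0 :=
      (Real.continuous_exp.comp (continuous_const.mul continuous_id)).intervalIntegrable _ _
    have hval : (∫ t in i..0, Real.exp (c*t)) = Real.exp 0 / c - Real.exp (c*i) / c := by
      have := intervalIntegral.integral_eq_sub_of_hasDerivAt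
        (fun t _ => qp_exp_hasDeriv c hc t) hii
      simpa using this
    have hnorm : (∫ t in (id i)..0, ‖Real.exp (c*t)‖) = ∫ t in i..0, Real.exp (c*t) := by
      simp [Real.norm_eq_abs, abs_of_pos (Real.exp_pos _)]
    rw [hnorm, hval, Real.exp_zero]
    have := (Real.exp_pos (c*i)).le
    rw [div_sub_div_same, div_le_div_iff₀ hc hc]
    nlinarith

lemma qp_exp_integral (c : ℝ) (hc : 0 < c) :
    (∫ t in Iic (0:ℝ), Real.exp (c*t)) = 1/c := by
  have := MeasureTheory.integral_Iic_of_hasDerivAt_of_tendsto'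
    (fun t _ => qp_exp_hasDeriv c hc t) (qp_exp_integrableOn c hc) (qp_exp_tendsto c hc)
  simpa using this

/-- Quasi-potential of the two-dimensional linear system with rotation: for the
matrix `A = [[-λ, -β], [β, -λ]]`, the Freidlin–Wentzell action
`(1/2)∫_{-∞}^0 ‖Ẏ - AY‖² dt` over locally absolutely continuous paths
`Y : (-∞,0] → ℝ²` with `Ẏ - AY ∈ L²`, `Y(0) = x` and `‖Y(t)‖ → 0` as `t → -∞`
has least value `λ‖x‖²` (so the infimum equals `λ‖x‖²` and is attained). -/
theorem quasiPotential_linear_rotation (l β : ℝ) (hl : 0 < l)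
    (x : EuclideanSpace ℝ (Fin 2)) :
    IsLeast
      {c : ℝ | ∃ Y Y' : ℝ → EuclideanSpace ℝ (Fin 2),
        (∀ a b : ℝ, a ≤ b → b ≤ 0 → IntervalIntegrable Y' volume a b) ∧
        (∀ a b : ℝ, a ≤ b → b ≤ 0 → Y b = Y a + ∫ r in a..b, Y' r) ∧
        IntegrableOn
          (fun t => ‖Y' t - Matrix.toEuclideanLin !![-l, -β; β, -l] (Y t)‖ ^ 2)
          (Iic 0) ∧
        Y 0 = x ∧
        Tendsto (fun t => ‖Y t‖) atBot (nhds 0) ∧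
        c = (1 / 2) * ∫ t in Iic (0 : ℝ),
          ‖Y' t - Matrix.toEuclideanLin !![-l, -β; β, -l] (Y t)‖ ^ 2}
      (l * ‖x‖ ^ 2) := by
  constructor
  · -- membership: the explicit minimizer
    refine ⟨qpY l β x, qpY' l β x, ?_, ?_, ?_, ?_, ?_, ?_⟩
    · -- interval integrability of Y'
      intro a b _ _
      have hYc : Continuous (qpY l β x) := by
        rw [continuous_iff_continuousAt]
        exact fun t => (qpY_hasDerivAt l β x t).continuousAt
      have hY'c : Continuous (qpY' l β x) := by
        have hpi : Continuous fun t => (PiLp.continuousLinearEquiv 2 ℝ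
            (fun _ : Fin 2 => ℝ)) (qpY l β x t) :=
          (PiLp.continuousLinearEquiv 2 ℝ (fun _ : Fin 2 => ℝ)).continuous.comp hYc
        have h0 : Continuous fun t => qpY l β x t 0 := (continuous_apply 0).comp hpi
        have h1 : Continuous fun t => qpY l β x t 1 := (continuous_apply 1).comp hpi
        refine ((PiLp.continuousLinearEquiv 2 ℝ
            (fun _ : Fin 2 => ℝ)).symm.continuous).comp ?_
        refine continuous_pi fun i => ?_
        fin_cases i
        · exact (continuous_const.mul h0).sub (continuous_const.mul h1)
        · exact (continuous_const.mul h0).add (continuous_const.mul h1)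
      exact hY'c.intervalIntegrable a b
    · -- FTC representation
      intro a b hab _
      have hii : IntervalIntegrable (qpY' l β x) volume a b := by
        have hY'c : Continuous (qpY' l β x) := by
          have hYc : Continuous (qpY l β x) := by
            rw [continuous_iff_continuousAt]
            exact fun t => (qpY_hasDerivAt l β x t).continuousAt
          have hpi : Continuous fun t => (PiLp.continuousLinearEquiv 2 ℝ
              (fun _ : Fin 2 => ℝ)) (qpY l β x t) :=
            (PiLp.continuousLinearEquiv 2 ℝ (fun _ : Fin 2 => ℝ)).continuous.comp hYc
          have h0 : Continuous fun t => qpY l β x t 0 := (continuous_apply 0).comp hpi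
          have h1 : Continuous fun t => qpY l β x t 1 := (continuous_apply 1).comp hpi
          refine ((PiLp.continuousLinearEquiv 2 ℝ
              (fun _ : Fin 2 => ℝ)).symm.continuous).comp ?_
          refine continuous_pi fun i => ?_
          fin_cases i
          · exact (continuous_const.mul h0).sub (continuous_const.mul h1)
          · exact (continuous_const.mul h0).add (continuous_const.mul h1)
        exact hY'c.intervalIntegrable a b
      have := intervalIntegral.integral_eq_sub_of_hasDerivAt
        (fun t _ => qpY_hasDerivAt l β x t) hii
      rw [this]
      abel
    · -- integrability of the action integrand
      have hgeq : (fun t => ‖qpY' l β x t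
          - Matrix.toEuclideanLin !![-l, -β; β, -l] (qpY l β x t)‖ ^ 2)
          = fun t => (4*l^2*‖x‖^2) * Real.exp (2*l*t) := by
        funext t
        rw [qpY_sub, norm_smul, mul_pow, Real.norm_eq_abs, sq_abs, qpY_norm_sq]
        ring
      rw [hgeq]
      exact (qp_exp_integrableOn (2*l) (by positivity)).const_mul _
    · -- Y 0 = x
      ext i
      fin_cases i <;> simp [qpY]
    · -- decay at -∞
      have hnorm : ∀ t, ‖qpY l β x t‖ = Real.exp (l*t) * ‖x‖ := by
        intro t
        have h1 : ‖qpY l β x t‖ ^ 2 = (Real.exp (l*t) * ‖x‖) ^ 2 := by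
          rw [qpY_norm_sq, mul_pow]
          congr 1
          rw [sq, ← Real.exp_add]
          ring_nf
        calc ‖qpY l β x t‖ = Real.sqrt (‖qpY l β x t‖ ^ 2) := by
              rw [Real.sqrt_sq (norm_nonneg _)]
          _ = Real.sqrt ((Real.exp (l*t) * ‖x‖) ^ 2) := by rw [h1]
          _ = Real.exp (l*t) * ‖x‖ := Real.sqrt_sq (by positivity)
      simp_rw [hnorm]
      have h1 : Tendsto (fun t : ℝ => l*t) atBot atBot :=
        Tendsto.const_mul_atBot hl tendsto_id
      have := (Real.tendsto_exp_atBot.comp h1).mul_const ‖x‖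
      simpa using this
    · -- value of the action
      have hgeq : (fun t => ‖qpY' l β x t
          - Matrix.toEuclideanLin !![-l, -β; β, -l] (qpY l β x t)‖ ^ 2)
          = fun t => (4*l^2*‖x‖^2) * Real.exp (2*l*t) := by
        funext t
        rw [qpY_sub, norm_smul, mul_pow, Real.norm_eq_abs, sq_abs, qpY_norm_sq]
        ring
      rw [hgeq, integral_const_mul, qp_exp_integral (2*l) (by positivity)]
      field_simp
      ring
  · -- lower bound
    rintro c ⟨Y, Y', h1, h2, h3, h4, h5, rfl⟩
    set g : ℝ → ℝ := fun t => ‖Y' t - Matrix.toEuclideanLin !![-l, -β; β, -l] (Y t)‖ ^ 2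
      with hgdef
    have key : ∀ a : ℝ, a ≤ 0 → 2*l*(‖x‖^2 - ‖Y a‖^2) ≤ ∫ t in Iic (0:ℝ), g t := by
      intro a ha
      have hfab : IntegrableOn Y' (Ioc a 0) :=
        (intervalIntegrable_iff_integrableOn_Ioc_of_le ha).1 (h1 a 0 ha le_rfl)
      have hYrep : ∀ t ∈ Icc a (0:ℝ), Y t = Y a + ∫ s in Ioc a t, Y' s := by
        intro t ht
        rw [h2 a t ht.1 ht.2, intervalIntegral.integral_of_le ht.1]
      have hII := qp_integral_inner_primitive ha hfab hYrep
      have hinner : IntegrableOn (fun t => ⟪Y' t, Y t⟫_ℝ) (Ioc a 0) :=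
        qp_inner_primitive_integrableOn hfab hYrep
      have hgab : IntegrableOn g (Ioc a 0) := h3.mono_set Ioc_subset_Iic_self
      have hmono : (∫ t in Ioc a 0, 4*l*⟪Y' t, Y t⟫_ℝ) ≤ ∫ t in Ioc a 0, g t := by
        refine integral_mono (hinner.const_mul _) hgab ?_
        intro t
        exact qp_pointwise l β (Y' t) (Y t)
      have hconst : (∫ t in Ioc a 0, 4*l*⟪Y' t, Y t⟫_ℝ)
          = 4*l*((‖Y 0‖^2 - ‖Y a‖^2)/2) := by
        rw [integral_const_mul, hII]
      have hsub : (∫ t in Ioc a 0, g t) ≤ ∫ t in Iic (0:ℝ), g t := by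
        refine setIntegral_mono_set h3 ?_ (HasSubset.Subset.eventuallyLE Ioc_subset_Iic_self)
        exact Eventually.of_forall fun t => sq_nonneg _
      rw [hconst, h4] at hmono
      calc 2*l*(‖x‖^2 - ‖Y a‖^2) = 4*l*((‖x‖^2 - ‖Y a‖^2)/2) := by ring
        _ ≤ ∫ t in Ioc a 0, g t := hmono
        _ ≤ ∫ t in Iic (0:ℝ), g t := hsub
    have htend : Tendsto (fun a : ℝ => 2*l*(‖x‖^2 - ‖Y a‖^2)) atBot
        (nhds (2*l*‖x‖^2)) := by
      have hsq : Tendsto (fun a : ℝ => ‖Y a‖^2) atBot (nhds 0) := by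
        have := h5.pow 2
        simpa using this
      have := (tendsto_const_nhds (x := ‖x‖^2) (f := atBot)).sub hsq
      have h' := this.const_mul (2*l)
      simpa using h'
    have hfin : 2*l*‖x‖^2 ≤ ∫ t in Iic (0:ℝ), g t := by
      refine le_of_tendsto htend ?_
      filter_upwards [eventually_le_atBot (0:ℝ)] with a ha
      exact key a ha
    have : l * ‖x‖ ^ 2 ≤ (1/2) * ∫ t in Iic (0:ℝ), g t := by linarith
    exact this
end
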